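/- Continuity of the dilated local term on a scaled extension. Let U ⊆ ℝ^m, let V ⊆ ℝ^n be compact, let h : ℝ^m → ℝ be an affine function that is nonnegative on U, and let d_v : ℝ^n → ℝ be continuous on V and nonnegative on V. Define d_v^□ on U ◁^h V by d_v^□(u,w) := h(u)·d_v(w/h(u)) if h(u) > 0 and d_v^□(u,w) := 0 if h(u) = 0 (this is well defined since for (u,w) ∈ U ◁^h V with h(u) > 0 one has w/h(u) ∈ V, and with h(u) = 0 one has w = 0). Then d_v^□ is continuous on U ◁^h V (with the subspace topology). -/

import Mathlib

/-- **Continuity of the dilated local term on a scaled extension.** If `V` is compact,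
`h` is affine and nonnegative on `U`, and `d_v` is continuous and nonnegative on `V`, then
the function `d_v^□(u, w) = h(u)·d_v(w / h(u))` (set to `0` when `h(u) = 0`) is continuous
on the scaled extension `U ◁^h V` with the subspace topology. -/
theorem continuousOn_dilated_term_scaledExtension
    {m n : ℕ}
    (U : Set (Fin m → ℝ)) (V : Set (Fin n → ℝ))
    (hVc : IsCompact V)
    (h : (Fin m → ℝ) →ᵃ[ℝ] ℝ)
    (hh0 : ∀ u ∈ U, 0 ≤ h u)
    (dv : (Fin n → ℝ) → ℝ)
    (hdvc : ContinuousOn dv V)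
    (hdv0 : ∀ v ∈ V, 0 ≤ dv v) :
    ContinuousOn
      (fun z : (Fin m → ℝ) × (Fin n → ℝ) =>
        if 0 < h z.1 then h z.1 * dv ((h z.1)⁻¹ • z.2) else 0)
      {z : (Fin m → ℝ) × (Fin n → ℝ) | ∃ u ∈ U, ∃ v ∈ V, z = (u, h u • v)} := by
  set S := {z : (Fin m → ℝ) × (Fin n → ℝ) | ∃ u ∈ U, ∃ v ∈ V, z = (u, h u • v)} with hSdef
  obtain ⟨C, hC⟩ := hVc.exists_bound_of_continuousOn hdvc
  have hhc : Continuous fun z : (Fin m → ℝ) × (Fin n → ℝ) => h z.1 :=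
    h.continuous_of_finiteDimensional.comp continuous_fst
  have hmem : ∀ z ∈ S, 0 < h z.1 → (h z.1)⁻¹ • z.2 ∈ V := by
    rintro z ⟨u, hu, v, hv, rfl⟩ hpos
    simp only at hpos ⊢
    rw [smul_smul, inv_mul_cancel₀ hpos.ne', one_smul]
    exact hv
  intro z₀ hz₀
  by_cases hpos : 0 < h z₀.1
  · -- positive case
    have ht : {z : (Fin m → ℝ) × (Fin n → ℝ) | 0 < h z.1} ∈ nhds z₀ :=
      (isOpen_lt continuous_const hhc).mem_nhds hpos
    rw [← continuousWithinAt_inter ht]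
    have hcw : ContinuousWithinAt
        (fun z : (Fin m → ℝ) × (Fin n → ℝ) => h z.1 * dv ((h z.1)⁻¹ • z.2))
        (S ∩ {z | 0 < h z.1}) z₀ := by
      refine (hhc.continuousAt.continuousWithinAt).mul ?_
      have harg : ContinuousWithinAt
          (fun z : (Fin m → ℝ) × (Fin n → ℝ) => (h z.1)⁻¹ • z.2)
          (S ∩ {z | 0 < h z.1}) z₀ :=
        ((hhc.continuousAt.inv₀ hpos.ne').smul continuous_snd.continuousAt).continuousWithinAt
      refine ContinuousWithinAt.comp (f := fun z : (Fin m → ℝ) × (Fin n → ℝ) => (h z.1)⁻¹ • z.2)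
          (hdvc ((h z₀.1)⁻¹ • z₀.2) (hmem z₀ hz₀ hpos)) harg ?_
      rintro z ⟨hzS, hzpos⟩
      exact hmem z hzS hzpos
    refine hcw.congr ?_ ?_
    · rintro z ⟨hzS, hzpos⟩
      exact if_pos hzpos
    · exact if_pos hpos
  · -- boundary case: h z₀.1 = 0
    have hz₀0 : ¬ 0 < h z₀.1 := hpos
    have hz₀eq : h z₀.1 = 0 := by
      obtain ⟨u, hu, v, hv, rfl⟩ := hz₀
      exact le_antisymm (not_lt.mp hpos) (hh0 u hu)
    have hC0 : 0 ≤ C := by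
      obtain ⟨u, hu, v, hv, rfl⟩ := hz₀
      exact le_trans (hdv0 v hv) (le_trans (le_abs_self _) (hC v hv))
    have hval : (if 0 < h z₀.1 then h z₀.1 * dv ((h z₀.1)⁻¹ • z₀.2) else 0) = 0 :=
      if_neg hpos
    rw [ContinuousWithinAt, hval]
    have htend : Filter.Tendsto (fun z : (Fin m → ℝ) × (Fin n → ℝ) => C * h z.1)
        (nhdsWithin z₀ S) (nhds 0) := by
      have : ContinuousAt (fun z : (Fin m → ℝ) × (Fin n → ℝ) => C * h z.1) z₀ :=
        ((continuous_const (y := C)).mul hhc).continuousAt (x := z₀)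
      rw [ContinuousAt, hz₀eq, mul_zero] at this
      exact this.mono_left nhdsWithin_le_nhds
    refine squeeze_zero' ?_ ?_ htend
    · filter_upwards [self_mem_nhdsWithin] with z hzS
      split_ifs with hp
      · exact mul_nonneg hp.le (hdv0 _ (hmem z hzS hp))
      · exact le_refl 0
    · filter_upwards [self_mem_nhdsWithin] with z hzS
      split_ifs with hp
      · have hb : dv ((h z.1)⁻¹ • z.2) ≤ C :=
          le_trans (le_abs_self _) (hC _ (hmem z hzS hp))
        calc h z.1 * dv ((h z.1)⁻¹ • z.2) ≤ h z.1 * C := by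
              exact mul_le_mul_of_nonneg_left hb hp.le
          _ = C * h z.1 := mul_comm _ _
      · obtain ⟨u, hu, v, hv, rfl⟩ := hzS
        exact mul_nonneg hC0 (hh0 u hu)
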